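/- Let k be a field of characteristic ≠ 2, (P, ⊥) a poset with an order-reversing involution, and ψ an indecomposable linear representation of P in a finite-dimensional k-vector space V such that every endomorphism of ψ has the form c·id_V + r with c ∈ k and r nilpotent. If B₁ and B₂ are compatible forms for ψ, then B₁ and B₂ are both symmetric or both alternating, and there exist a nonzero scalar c ∈ k and an automorphism h of ψ such that B₂(x, y) = c · B₁(h x, h y) for all x, y ∈ V. -/

import Mathlib

lemma sqrt_one_add_aux' {R : Type*} [CommRing R] (h2 : ∃ y : R, y + y = 1) :
    ∀ m : ℕ, ∀ x : R, x ^ m = 0 → ∃ s : R, IsUnit s ∧ s ^ 2 = 1 + x := by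
  obtain ⟨i2, hi2⟩ := h2
  intro m
  induction m using Nat.strong_induction_on with
  | _ m ih =>
    match m with
    | 0 =>
      intro x hx
      have h01 : (0 : R) = 1 := by simpa using hx.symm
      haveI := subsingleton_of_zero_eq_one h01
      exact ⟨1, isUnit_one, Subsingleton.elim _ _⟩
    | 1 =>
      intro x hx
      rw [pow_one] at hx
      exact ⟨1, isUnit_one, by simp [hx]⟩
    | (j+2) =>
      intro x hx
      have hnx : IsNilpotent x := ⟨_, hx⟩
      have hu : IsUnit (1 + x) := hnx.isUnit_one_add
      set e := i2 ^ 2 * x ^ 2 * Ring.inverse (1 + x) with he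
      have hs0 : (1 + i2 * x) ^ 2 = (1 + x) * (1 + e) := by
        have h1 : (1 + x) * Ring.inverse (1 + x) = 1 := Ring.mul_inverse_cancel _ hu
        have h2' : (1 + i2 * x) ^ 2 = 1 + (i2 + i2) * x + i2 ^ 2 * x ^ 2 := by ring
        rw [h2', hi2, one_mul]
        calc 1 + x + i2 ^ 2 * x ^ 2
            = 1 + x + i2 ^ 2 * x ^ 2 * ((1 + x) * Ring.inverse (1 + x)) := by rw [h1]; ring
          _ = (1 + x) * (1 + e) := by rw [he]; ring
      have hepow : e ^ (j + 1) = 0 := by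
        have hx2 : x ^ (2 * (j + 1)) = 0 := by
          have hh : x ^ (2 * (j + 1)) = x ^ (j + 2) * x ^ j := by ring
          rw [hh, hx, zero_mul]
        have hh : e ^ (j + 1) = (i2 ^ 2 * Ring.inverse (1 + x)) ^ (j + 1) * x ^ (2 * (j + 1)) := by
          rw [he]; ring
        rw [hh, hx2, mul_zero]
      obtain ⟨t, htu, ht2⟩ := ih (j + 1) (by omega) e hepow
      have hs0u : IsUnit (1 + i2 * x) := by
        refine IsNilpotent.isUnit_one_add ⟨j + 2, ?_⟩
        rw [mul_pow, hx, mul_zero]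
      refine ⟨(1 + i2 * x) * Ring.inverse t, hs0u.mul (isUnit_ringInverse.mpr htu), ?_⟩
      have htt : t * Ring.inverse t = 1 := Ring.mul_inverse_cancel _ htu
      calc ((1 + i2 * x) * Ring.inverse t) ^ 2
          = (1 + i2 * x) ^ 2 * (Ring.inverse t) ^ 2 := by ring
        _ = (1 + x) * (1 + e) * (Ring.inverse t) ^ 2 := by rw [hs0]
        _ = (1 + x) * (t * Ring.inverse t) ^ 2 := by rw [← ht2]; ring
        _ = 1 + x := by rw [htt]; ring

lemma exists_sqrt_unipotent {k V : Type*} [Field k] [AddCommGroup V] [Module k V]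
    (h2 : (2 : k) ≠ 0) (n : Module.End k V) (hn : IsNilpotent n) :
    ∃ h h' : Module.End k V, h ∈ Algebra.adjoin k {n} ∧ h' ∈ Algebra.adjoin k {n} ∧
      h * h' = 1 ∧ h' * h = 1 ∧ h * h = 1 + n := by
  obtain ⟨m, hm⟩ := hn
  set I : Ideal (Polynomial k) := Ideal.span {Polynomial.X ^ m} with hI
  let mk := Ideal.Quotient.mk I
  have hx : (mk Polynomial.X) ^ m = 0 := by
    rw [← map_pow, Ideal.Quotient.eq_zero_iff_mem]
    exact Ideal.subset_span rfl
  have hhalf : ∃ y : Polynomial k ⧸ I, y + y = 1 := by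
    refine ⟨mk (Polynomial.C (2⁻¹ : k)), ?_⟩
    rw [← map_add, ← Polynomial.C_add]
    have : (2⁻¹ : k) + 2⁻¹ = 1 := by
      rw [← two_mul, mul_inv_cancel₀ h2]
    rw [this, Polynomial.C_1, map_one]
  obtain ⟨s, hsu, hs2⟩ := sqrt_one_add_aux' hhalf m (mk Polynomial.X) hx
  obtain ⟨u, rfl⟩ := hsu
  obtain ⟨q, hq⟩ := Ideal.Quotient.mk_surjective (I := I) (u : Polynomial k ⧸ I)
  obtain ⟨q', hq'⟩ := Ideal.Quotient.mk_surjective (I := I) ((u⁻¹ : _) : Polynomial k ⧸ I)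
  have hdvd : ∀ a : Polynomial k, mk a = 0 → ∃ g, a = Polynomial.X ^ m * g := by
    intro a ha
    rw [Ideal.Quotient.eq_zero_iff_mem, hI, Ideal.mem_span_singleton] at ha
    obtain ⟨g, hg⟩ := ha
    exact ⟨g, hg⟩
  obtain ⟨g₁, hg₁⟩ := hdvd (q ^ 2 - (1 + Polynomial.X)) (by
    rw [map_sub, map_pow, hq, map_add, map_one, hs2]; ring)
  obtain ⟨g₂, hg₂⟩ := hdvd (q * q' - 1) (by
    rw [map_sub, map_mul, hq, hq', map_one]
    simp [Units.mul_inv])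
  refine ⟨Polynomial.aeval n q, Polynomial.aeval n q', ?_, ?_, ?_, ?_, ?_⟩
  · rw [Algebra.adjoin_singleton_eq_range_aeval]; exact ⟨q, rfl⟩
  · rw [Algebra.adjoin_singleton_eq_range_aeval]; exact ⟨q', rfl⟩
  · have := congrArg (Polynomial.aeval n) hg₂
    rw [map_sub, map_mul, map_one, map_mul, map_pow, Polynomial.aeval_X, hm, zero_mul,
      sub_eq_zero] at this
    exact this
  · have := congrArg (Polynomial.aeval n) hg₂
    rw [map_sub, map_mul, map_one, map_mul, map_pow, Polynomial.aeval_X, hm, zero_mul,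
      sub_eq_zero] at this
    calc Polynomial.aeval n q' * Polynomial.aeval n q
        = Polynomial.aeval n (q' * q) := (map_mul _ _ _).symm
      _ = Polynomial.aeval n (q * q') := by rw [mul_comm]
      _ = 1 := by rw [map_mul, this]
  · have := congrArg (Polynomial.aeval n) hg₁
    rw [map_sub, map_pow, map_add, map_one, Polynomial.aeval_X, map_mul, map_pow,
      Polynomial.aeval_X, hm, zero_mul, sub_eq_zero] at this
    rw [← pow_two]
    exact this

lemma adjoin_singleton_comm' {k A : Type*} [CommSemiring k] [Ring A] [Algebra k A] (n : A) :
    ∀ x ∈ Algebra.adjoin k {n}, ∀ y ∈ Algebra.adjoin k {n}, Commute x y := by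
  intro x hx y hy
  induction hx, hy using Algebra.adjoin_induction₂ with
  | mem_mem a b ha hb =>
    rw [Set.mem_singleton_iff] at ha hb; rw [ha, hb]
  | algebraMap_both r₁ r₂ => exact Algebra.commutes r₁ _
  | algebraMap_left r a _ => exact Algebra.commutes r a
  | algebraMap_right r a _ => exact (Algebra.commutes r a).symm
  | add_left _ _ _ _ _ _ h1 h2 => exact h1.add_left h2
  | add_right _ _ _ _ _ _ h1 h2 => exact h1.add_right h2
  | mul_left _ _ _ _ _ _ h1 h2 => exact h1.mul_left h2
  | mul_right _ _ _ _ _ _ h1 h2 => exact h1.mul_right h2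

/-- Let `k` be a field of characteristic `≠ 2`, `(P, ⊥)` a poset with
an order-reversing involution, and `ψ` an indecomposable linear representation of `P`
in a finite-dimensional `k`-vector space `V` such that every endomorphism of `ψ` has
the form `c • id + r` with `c ∈ k` and `r` nilpotent.  If `B₁`, `B₂` are compatible
forms for `ψ`, then they are both symmetric or both alternating, and there are a
nonzero scalar `c` and an automorphism `h` of `ψ` with `B₂(x, y) = c · B₁(h x, h y)`
for all `x, y`. -/
theorem compatible_forms_unique_up_to_scalar_and_automorphism
    {k V P : Type*} [Field k] [AddCommGroup V] [Module k V] [FiniteDimensional k V]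
    [PartialOrder P] (h2 : (2 : k) ≠ 0) [Nontrivial V]
    (invol : P → P) (hinv : Function.Involutive invol) (hanti : Antitone invol)
    (ψ : P → Submodule k V) (hmono : Monotone ψ)
    (hindec : ∀ U' U'' : Submodule k V, IsCompl U' U'' →
      (∀ p, ψ p = (ψ p ⊓ U') ⊔ (ψ p ⊓ U'')) → U' = ⊥ ∨ U'' = ⊥)
    (hlocal : ∀ f : V →ₗ[k] V, (∀ p, (ψ p).map f ≤ ψ p) →
      ∃ c : k, IsNilpotent (f - c • LinearMap.id))
    (B₁ B₂ : LinearMap.BilinForm k V)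
    (h₁nd : LinearMap.BilinForm.Nondegenerate B₁)
    (h₁sa : LinearMap.IsSymm B₁ ∨ LinearMap.IsAlt B₁)
    (h₁c : ∀ p, ∀ v : V, v ∈ ψ (invol p) ↔ ∀ w ∈ ψ p, B₁ v w = 0)
    (h₂nd : LinearMap.BilinForm.Nondegenerate B₂)
    (h₂sa : LinearMap.IsSymm B₂ ∨ LinearMap.IsAlt B₂)
    (h₂c : ∀ p, ∀ v : V, v ∈ ψ (invol p) ↔ ∀ w ∈ ψ p, B₂ v w = 0) :
    ((LinearMap.IsSymm B₁ ∧ LinearMap.IsSymm B₂) ∨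
      (LinearMap.IsAlt B₁ ∧ LinearMap.IsAlt B₂)) ∧
    ∃ (c : k) (h : V ≃ₗ[k] V), c ≠ 0 ∧
      (∀ p, (ψ p).map (h : V →ₗ[k] V) = ψ p) ∧
      ∀ x y : V, B₂ x y = c * B₁ (h x) (h y) := by
  classical
  set f : V →ₗ[k] V := ((LinearMap.BilinForm.toDual B₁ h₁nd).symm.toLinearMap).comp B₂ with hfdef
  have hf : ∀ x y : V, B₁ (f x) y = B₂ x y := by
    intro x y
    simpa [hfdef] using
      LinearMap.BilinForm.apply_toDual_symm_apply (B := B₁) (hB := h₁nd) (B₂ x) y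
  have hψ₁ : ∀ p (v : V), v ∈ ψ p ↔ ∀ w ∈ ψ (invol p), B₁ v w = 0 := fun p v => by
    have h := h₁c (invol p) v; rwa [hinv p] at h
  have hψ₂ : ∀ p (v : V), v ∈ ψ p ↔ ∀ w ∈ ψ (invol p), B₂ v w = 0 := fun p v => by
    have h := h₂c (invol p) v; rwa [hinv p] at h
  have hfe : ∀ p, ∀ v ∈ ψ p, f v ∈ ψ p := by
    intro p v hv
    rw [hψ₁]
    intro w hw
    rw [hf]
    exact (hψ₂ p v).1 hv w hw
  have hfmap : ∀ p, (ψ p).map f ≤ ψ p := by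
    intro p
    rw [Submodule.map_le_iff_le_comap]
    intro v hv
    exact hfe p v hv
  obtain ⟨c, m, hm⟩ := hlocal f hfmap
  set r : V →ₗ[k] V := f - c • LinearMap.id with hrdef
  have hf0 : ∀ x : V, f x = 0 → x = 0 := by
    intro x hx
    apply h₂nd.1
    intro y
    rw [← hf x y, hx]
    simp
  have hc : c ≠ 0 := by
    rintro rfl
    have hfm : ∀ j, ∀ x : V, (f ^ j) x = 0 → x = 0 := by
      intro j
      induction j with
      | zero => intro x hx; simpa using hx
      | succ j ih =>
        intro x hx
        rw [pow_succ, Module.End.mul_apply] at hx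
        exact hf0 x (ih (f x) hx)
    obtain ⟨v, hv⟩ := exists_ne (0 : V)
    have hrf : r = f := by rw [hrdef]; simp
    rw [hrf] at hm
    exact hv (hfm m v (by rw [hm]; rfl))
  -- contradiction helper for mixed symmetry types
  have bad : (∀ x y : V, B₁ (f x) y = - B₁ x (f y)) → False := by
    intro hasa
    set g : V →ₗ[k] V := -f - c • LinearMap.id with hgdef
    have hg : ∀ x y : V, B₁ (g x) y = B₁ x (r y) := by
      intro x y
      have e1 : B₁ (g x) y = - B₁ (f x) y - c * B₁ x y := by
        rw [hgdef]
        simp [map_sub, map_neg, map_smul, smul_eq_mul]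
      have e2 : B₁ x (r y) = B₁ x (f y) - c * B₁ x y := by
        rw [hrdef]
        simp [map_sub, map_smul, smul_eq_mul]
      rw [e1, e2, hasa x y]
      ring
    have hgr : ∀ j, ∀ x y : V, B₁ ((g ^ j) x) y = B₁ x ((r ^ j) y) := by
      intro j
      induction j with
      | zero => intro x y; simp
      | succ j ih =>
        intro x y
        calc B₁ ((g ^ (j + 1)) x) y = B₁ ((g ^ j) (g x)) y := by
              rw [pow_succ, Module.End.mul_apply]
          _ = B₁ (g x) ((r ^ j) y) := ih (g x) y
          _ = B₁ x (r ((r ^ j) y)) := hg x _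
          _ = B₁ x ((r ^ (j + 1)) y) := by rw [pow_succ', Module.End.mul_apply]
    have hgm : g ^ m = 0 := by
      ext x
      simp only [LinearMap.zero_apply]
      apply h₁nd.1
      intro y
      rw [hgr m x y, hm]
      simp
    have hcid : ∀ (d : k) (a : V →ₗ[k] V), Commute (d • LinearMap.id : V →ₗ[k] V) a := by
      intro d a
      show _ * _ = _ * _
      ext v
      simp [Module.End.mul_apply, map_smul]
    have hgeq : g = -r - (2 * c) • LinearMap.id := by
      rw [hgdef, hrdef]
      ext v
      simp only [LinearMap.sub_apply, LinearMap.neg_apply, LinearMap.smul_apply,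
        LinearMap.id_apply]
      module
    have hcomm : Commute g r := by
      rw [hgeq]
      exact ((Commute.refl r).neg_left).sub_left (hcid (2 * c) r)
    have hnil : IsNilpotent (g + r) := hcomm.isNilpotent_add ⟨m, hgm⟩ ⟨m, hm⟩
    have hsum : g + r = (-(2 * c)) • LinearMap.id := by
      rw [hgeq]
      ext v
      simp only [LinearMap.add_apply, LinearMap.sub_apply, LinearMap.neg_apply,
        LinearMap.smul_apply, LinearMap.id_apply]
      module
    rw [hsum] at hnil
    obtain ⟨N, hN⟩ := hnil
    obtain ⟨v, hv⟩ := exists_ne (0 : V)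
    have hvz : (-(2 * c)) ^ N • v = 0 := by
      have h := congrArg (fun t : V →ₗ[k] V => t v) hN
      rw [smul_pow] at h
      simpa [← Module.End.one_eq_id] using h
    have hNz : (-(2 * c)) ^ N = 0 := by
      rcases smul_eq_zero.mp hvz with h | h
      · exact h
      · exact absurd h hv
    have h2c0 : -(2 * c) = 0 := by
      rcases Nat.eq_zero_or_pos N with hN0 | hN0
      · rw [hN0, pow_zero] at hNz; exact absurd hNz one_ne_zero
      · exact pow_eq_zero_iff hN0.ne' |>.mp hNz
    have : c = 0 := by
      have h2c : 2 * c = 0 := neg_eq_zero.mp h2c0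
      rcases mul_eq_zero.mp h2c with h | h
      · exact absurd h h2
      · exact h
    exact hc this
  have hsplit : ((LinearMap.IsSymm B₁ ∧ LinearMap.IsSymm B₂) ∨
      (LinearMap.IsAlt B₁ ∧ LinearMap.IsAlt B₂)) ∧ (∀ x y, B₁ (f x) y = B₁ x (f y)) := by
    rcases h₁sa with hs1 | ha1 <;> rcases h₂sa with hs2 | ha2
    · refine ⟨Or.inl ⟨hs1, hs2⟩, fun x y => ?_⟩
      calc B₁ (f x) y = B₂ x y := hf x y
        _ = B₂ y x := by simpa using hs2.eq x y
        _ = B₁ (f y) x := (hf y x).symm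
        _ = B₁ x (f y) := by simpa using hs1.eq (f y) x
    · exact absurd (fun x y => by
        calc B₁ (f x) y = B₂ x y := hf x y
          _ = - B₂ y x := (ha2.neg y x).symm
          _ = - B₁ (f y) x := by rw [hf y x]
          _ = - B₁ x (f y) := by rw [show B₁ (f y) x = B₁ x (f y) by simpa using hs1.eq (f y) x])
        (fun h => bad h)
    · exact absurd (fun x y => by
        calc B₁ (f x) y = B₂ x y := hf x y
          _ = B₂ y x := by simpa using hs2.eq x y
          _ = B₁ (f y) x := (hf y x).symm
          _ = - B₁ x (f y) := (ha1.neg x (f y)).symm)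
        (fun h => bad h)
    · refine ⟨Or.inr ⟨ha1, ha2⟩, fun x y => ?_⟩
      calc B₁ (f x) y = B₂ x y := hf x y
        _ = - B₂ y x := (ha2.neg y x).symm
        _ = - B₁ (f y) x := by rw [hf y x]
        _ = B₁ x (f y) := ha1.neg (f y) x
  obtain ⟨hsym, hSA⟩ := hsplit
  set n : V →ₗ[k] V := c⁻¹ • r with hndef
  have hnnil : IsNilpotent n := ⟨m, by rw [hndef, smul_pow, hm, smul_zero]⟩
  have hrSA : ∀ x y : V, B₁ (r x) y = B₁ x (r y) := by
    intro x y
    have e1 : B₁ (r x) y = B₁ (f x) y - c * B₁ x y := by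
      rw [hrdef]; simp [map_sub, map_smul, smul_eq_mul]
    have e2 : B₁ x (r y) = B₁ x (f y) - c * B₁ x y := by
      rw [hrdef]; simp [map_sub, map_smul, smul_eq_mul]
    rw [e1, e2, hSA x y]
  have hnSA : ∀ x y : V, B₁ (n x) y = B₁ x (n y) := by
    intro x y
    have e1 : B₁ (n x) y = c⁻¹ * B₁ (r x) y := by
      rw [hndef]; simp [map_smul, smul_eq_mul]
    have e2 : B₁ x (n y) = c⁻¹ * B₁ x (r y) := by
      rw [hndef]; simp [map_smul, smul_eq_mul]
    rw [e1, e2, hrSA x y]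
  have hre : ∀ p, ∀ v ∈ ψ p, r v ∈ ψ p := by
    intro p v hv
    have e : r v = f v - c • v := by rw [hrdef]; simp
    rw [e]
    exact Submodule.sub_mem _ (hfe p v hv) (Submodule.smul_mem _ c hv)
  have hne : ∀ p, ∀ v ∈ ψ p, n v ∈ ψ p := by
    intro p v hv
    have e : n v = c⁻¹ • r v := by rw [hndef]; simp
    rw [e]
    exact Submodule.smul_mem _ _ (hre p v hv)
  obtain ⟨hE, hE', hEmem, hE'mem, hEE', hE'E, hEsq⟩ := exists_sqrt_unipotent h2 n hnnil
  have hcommA := adjoin_singleton_comm' (k := k) n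
  have hadj : ∀ a ∈ Algebra.adjoin k {n},
      (∀ p, ∀ v ∈ ψ p, a v ∈ ψ p) ∧ (∀ x y : V, B₁ (a x) y = B₁ x (a y)) := by
    intro a ha
    induction ha using Algebra.adjoin_induction with
    | mem b hb =>
      rw [Set.mem_singleton_iff] at hb
      subst hb
      exact ⟨hne, hnSA⟩
    | algebraMap d =>
      refine ⟨fun p v hv => ?_, fun x y => ?_⟩
      · rw [Module.algebraMap_end_apply]
        exact Submodule.smul_mem _ _ hv
      · rw [Module.algebraMap_end_apply, Module.algebraMap_end_apply]
        simp [map_smul, smul_eq_mul]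
    | add a b haM hbM iha ihb =>
      refine ⟨fun p v hv => ?_, fun x y => ?_⟩
      · rw [LinearMap.add_apply]
        exact Submodule.add_mem _ (iha.1 p v hv) (ihb.1 p v hv)
      · rw [LinearMap.add_apply, LinearMap.add_apply]
        simp [map_add, iha.2 x y, ihb.2 x y]
    | mul a b haM hbM iha ihb =>
      refine ⟨fun p v hv => ?_, fun x y => ?_⟩
      · rw [Module.End.mul_apply]
        exact iha.1 p _ (ihb.1 p v hv)
      · calc B₁ ((a * b) x) y = B₁ (a (b x)) y := by rw [Module.End.mul_apply]
          _ = B₁ (b x) (a y) := iha.2 _ _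
          _ = B₁ x (b (a y)) := ihb.2 _ _
          _ = B₁ x ((b * a) y) := by rw [Module.End.mul_apply]
          _ = B₁ x ((a * b) y) := by rw [hcommA b hbM a haM]
  have hEp := hadj hE hEmem
  have hE'p := hadj hE' hE'mem
  refine ⟨hsym, c, LinearEquiv.ofLinear hE hE'
      (by rw [← Module.End.mul_eq_comp, hEE', Module.End.one_eq_id])
      (by rw [← Module.End.mul_eq_comp, hE'E, Module.End.one_eq_id]), hc, ?_, ?_⟩
  · intro p
    apply le_antisymm
    · rw [Submodule.map_le_iff_le_comap]
      intro v hv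
      exact hEp.1 p v hv
    · intro v hv
      refine ⟨hE' v, hE'p.1 p v hv, ?_⟩
      have h := congrArg (fun t : V →ₗ[k] V => t v) hEE'
      simpa [Module.End.mul_apply] using h
  · intro x y
    rw [LinearEquiv.ofLinear_apply, LinearEquiv.ofLinear_apply]
    have key : B₁ (hE x) (hE y) = B₁ (hE (hE x)) y := (hEp.2 (hE x) y).symm
    have hsq : hE (hE x) = x + n x := by
      have h := congrArg (fun t : V →ₗ[k] V => t x) hEsq
      simpa [Module.End.mul_apply] using h
    have hnx : B₁ (x + n x) y = B₁ x y + c⁻¹ * (B₂ x y - c * B₁ x y) := by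
      have e1 : B₁ (n x) y = c⁻¹ * (B₁ (f x) y - c * B₁ x y) := by
        rw [hndef, hrdef]
        simp [map_sub, map_smul, smul_eq_mul]
      rw [map_add, LinearMap.add_apply, e1, hf x y]
    rw [key, hsq, hnx]
    field_simp
    ring
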